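/- Let μ be a non-degenerate probability distribution on ℝ^d and let R be a hyper-rectangle. Then R can be partitioned into two hyper-rectangles R₁, R₂ such that μ(R₁) ≥ μ(R)/4 and μ(R₂) ≥ μ(R)/4. -/

import Mathlib

open MeasureTheory Filter
open scoped ENNReal

lemma exists_median {d : ℕ} (μ : Measure (Fin d → ℝ)) [IsFiniteMeasure μ]
    (a b : Fin d → ℝ) (i : Fin d)
    (hm0 : μ (Set.univ.pi fun j => Set.Ioc (a j) (b j)) ≠ 0) :
    ∃ c : ℝ, a i < c ∧ c ≤ b i ∧
      μ (Set.univ.pi fun j => Set.Ioc (a j) (b j)) / 2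
        ≤ μ ((Set.univ.pi fun j => Set.Ioc (a j) (b j)) ∩ {x | x i ≤ c}) ∧
      μ (Set.univ.pi fun j => Set.Ioc (a j) (b j)) / 2
        ≤ μ ((Set.univ.pi fun j => Set.Ioc (a j) (b j)) ∩ {x | c ≤ x i}) := by
  set R := Set.univ.pi fun j => Set.Ioc (a j) (b j) with hRdef
  have hRm : MeasurableSet R := MeasurableSet.univ_pi fun j => measurableSet_Ioc
  set m := μ R with hmdef
  have hm2 : m / 2 ≠ 0 := by
    simp [ENNReal.div_eq_zero_iff, hm0]
  set f : ℝ → ℝ≥0∞ := fun t => μ (R ∩ {x | x i ≤ t}) with hfdef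
  have hfmono : Monotone f := by
    intro s t hst
    exact measure_mono (by exact fun x ⟨h1, h2⟩ => ⟨h1, le_trans h2 hst⟩)
  have hfa : ∀ t ≤ a i, f t = 0 := by
    intro t ht
    have : R ∩ {x | x i ≤ t} = ∅ := by
      ext x
      simp only [Set.mem_inter_iff, Set.mem_empty_iff_false, iff_false]
      rintro ⟨hx, hxt⟩
      have := (hx i (Set.mem_univ i)).1
      simp only [Set.mem_setOf_eq] at hxt
      linarith
    simp [hfdef, this]
  have hfb : f (b i) = m := by
    have : R ∩ {x | x i ≤ b i} = R := by
      apply Set.inter_eq_self_of_subset_left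
      intro x hx
      exact (hx i (Set.mem_univ i)).2
    simp [hfdef, this, hmdef]
  set S : Set ℝ := {t | m / 2 ≤ f t} with hSdef
  have hbS : b i ∈ S := by
    simp only [hSdef, Set.mem_setOf_eq, hfb]
    exact ENNReal.half_le_self
  have hSne : S.Nonempty := ⟨b i, hbS⟩
  have hSbdd : BddBelow S := by
    refine ⟨a i, fun t ht => ?_⟩
    by_contra h
    push_neg at h
    have : f t = 0 := hfa t h.le
    rw [hSdef, Set.mem_setOf_eq, this] at ht
    exact hm2 (le_antisymm ht zero_le)
  set c := sInf S with hcdef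
  have hcb : c ≤ b i := csInf_le hSbdd hbS
  -- right continuity bound
  have hkey : ∀ ε : ℝ, 0 < ε → m / 2 ≤ f (c + ε) := by
    intro ε hε
    obtain ⟨t, htS, htlt⟩ := (csInf_lt_iff hSbdd hSne).1 (by linarith : c < c + ε)
    exact le_trans htS (hfmono htlt.le)
  have hfc : m / 2 ≤ f c := by
    have hseq : Tendsto (fun n : ℕ => μ (R ∩ {x | x i ≤ c + 1 / (n + 1)})) atTop
        (nhds (μ (⋂ n : ℕ, R ∩ {x | x i ≤ c + 1 / (n + 1)}))) := by
      apply tendsto_measure_iInter_atTop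
      · intro n
        exact (hRm.inter (measurableSet_le (measurable_pi_apply i) measurable_const)).nullMeasurableSet
      · intro n k hnk
        apply Set.inter_subset_inter_right
        intro x hx
        simp only [Set.mem_setOf_eq] at hx ⊢
        have hcast : (n:ℝ) ≤ k := Nat.cast_le.2 hnk
        have : (1 : ℝ) / (k + 1) ≤ 1 / (n + 1) := by
          apply one_div_le_one_div_of_le
          · positivity
          · linarith
        linarith
      · exact ⟨0, measure_ne_top μ _⟩
    have hiInter : (⋂ n : ℕ, R ∩ {x | x i ≤ c + 1 / (n + 1)}) = R ∩ {x | x i ≤ c} := by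
      ext x
      simp only [Set.mem_iInter, Set.mem_inter_iff, Set.mem_setOf_eq]
      constructor
      · rintro h
        refine ⟨(h 0).1, ?_⟩
        by_contra hlt
        push_neg at hlt
        obtain ⟨n, hn⟩ := exists_nat_one_div_lt (by linarith : (0:ℝ) < x i - c)
        have := (h n).2
        linarith
      · rintro ⟨h1, h2⟩ n
        have : (0:ℝ) < 1 / ((n:ℝ) + 1) := by positivity
        exact ⟨h1, by linarith⟩
    rw [hiInter] at hseq
    refine ge_of_tendsto hseq (Filter.Eventually.of_forall fun n => ?_)
    exact hkey _ (by positivity)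
  -- a i < c
  have hac : a i < c := by
    by_contra h
    push_neg at h
    have : f c = 0 := hfa c h
    rw [this] at hfc
    exact hm2 (le_antisymm hfc zero_le)
  -- lower half
  have hlow : μ (R ∩ {x | x i < c}) ≤ m / 2 := by
    have hU : (R ∩ {x | x i < c}) = ⋃ n : ℕ, R ∩ {x | x i ≤ c - 1 / (n + 1)} := by
      ext x
      simp only [Set.mem_iUnion, Set.mem_inter_iff, Set.mem_setOf_eq]
      constructor
      · rintro ⟨h1, h2⟩
        obtain ⟨n, hn⟩ := exists_nat_one_div_lt (by linarith : (0:ℝ) < c - x i)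
        exact ⟨n, h1, by linarith⟩
      · rintro ⟨n, h1, h2⟩
        have : (0:ℝ) < 1 / (n + 1) := by positivity
        exact ⟨h1, by linarith⟩
    rw [hU]
    have hmonoU : Monotone fun n : ℕ => R ∩ {x | x i ≤ c - 1 / (n + 1)} := by
      intro n k hnk
      apply Set.inter_subset_inter_right
      intro x hx
      simp only [Set.mem_setOf_eq] at hx ⊢
      have h1 : (1 : ℝ) / (k + 1) ≤ 1 / (n + 1) := by
        apply one_div_le_one_div_of_le
        · positivity
        · have : (n:ℝ) ≤ k := Nat.cast_le.2 hnk
          linarith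
      linarith
    have := tendsto_measure_iUnion_atTop (μ := μ) hmonoU
    refine le_of_tendsto this (Filter.Eventually.of_forall fun n => ?_)
    have hnotS : c - 1 / (n + 1) ∉ S := by
      intro hmem
      have := csInf_le hSbdd hmem
      have hp : (0:ℝ) < 1 / ((n:ℝ) + 1) := by positivity
      rw [← hcdef] at this
      linarith
    simp only [hSdef, Set.mem_setOf_eq, not_le] at hnotS
    exact hnotS.le
  have hup : m / 2 ≤ μ (R ∩ {x | c ≤ x i}) := by
    have hsplit : m ≤ μ (R ∩ {x | x i < c}) + μ (R ∩ {x | c ≤ x i}) := by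
      rw [hmdef]
      refine le_trans (measure_mono ?_) (measure_union_le _ _)
      intro x hx
      rcases lt_or_ge (x i) c with h | h
      · exact Or.inl ⟨hx, h⟩
      · exact Or.inr ⟨hx, h⟩
    have h2 : m ≤ m / 2 + μ (R ∩ {x | c ≤ x i}) :=
      le_trans hsplit (add_le_add_left hlow _)
    have hfin : m / 2 ≠ ∞ := by
      rw [hmdef]; exact (ENNReal.div_lt_top (measure_ne_top μ _) (by norm_num)).ne
    calc m / 2 = m - m / 2 := (ENNReal.sub_half (measure_ne_top μ _)).symm
      _ ≤ μ (R ∩ {x | c ≤ x i}) := tsub_le_iff_left.2 h2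
  exact ⟨c, hac, hcb, hfc, hup⟩

/-- A hyper-rectangle in `ℝ^d`: a product of half-open intervals `(aᵢ, bᵢ]`. -/
def IsHyperRect {d : ℕ} (S : Set (Fin d → ℝ)) : Prop :=
  ∃ a b : Fin d → ℝ, S = Set.univ.pi fun i => Set.Ioc (a i) (b i)

/-- A measure is non-degenerate if for every point some coordinate hyperplane through it
has measure zero. -/
def NonDegenerate {d : ℕ} (μ : Measure (Fin d → ℝ)) : Prop :=
  ∀ x : Fin d → ℝ, ∃ i : Fin d, μ {x' | x' i = x i} = 0

/-- Any hyper-rectangle can be partitioned into two hyper-rectangles, each carrying at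
least a quarter of its mass. -/
theorem hyperrect_partition_into_two
    (d : ℕ) (μ : Measure (Fin d → ℝ)) [IsProbabilityMeasure μ] (hμ : NonDegenerate μ)
    (R : Set (Fin d → ℝ)) (hR : IsHyperRect R) :
    ∃ R₁ R₂ : Set (Fin d → ℝ),
      IsHyperRect R₁ ∧ IsHyperRect R₂ ∧ R₁ ∪ R₂ = R ∧ Disjoint R₁ R₂ ∧
      μ R / 4 ≤ μ R₁ ∧ μ R / 4 ≤ μ R₂ := by
  rcases Nat.eq_zero_or_pos d with hd | hd
  · subst hd
    obtain ⟨i, -⟩ := hμ (fun _ => 0)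
    exact i.elim0
  obtain ⟨a, b, rfl⟩ := hR
  set R := Set.univ.pi fun j => Set.Ioc (a j) (b j) with hRdef
  by_cases hm0 : μ R = 0
  · refine ⟨R, Set.univ.pi fun j => Set.Ioc (b j) (b j), ⟨a, b, rfl⟩, ⟨b, b, rfl⟩, ?_, ?_, ?_, ?_⟩
    · have : (Set.univ.pi fun j => Set.Ioc (b j) (b j)) = (∅ : Set (Fin d → ℝ)) := by
        ext x
        simp only [Set.mem_pi, Set.mem_univ, true_implies, Set.mem_empty_iff_false, iff_false]
        intro h
        exact absurd (h ⟨0, hd⟩) (by simp)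
      rw [this, Set.union_empty]
    · have : (Set.univ.pi fun j => Set.Ioc (b j) (b j)) = (∅ : Set (Fin d → ℝ)) := by
        ext x
        simp only [Set.mem_pi, Set.mem_univ, true_implies, Set.mem_empty_iff_false, iff_false]
        intro h
        exact absurd (h ⟨0, hd⟩) (by simp)
      rw [this]
      exact disjoint_bot_right
    · simp [hm0]
    · simp [hm0]
  · have hmed := fun i => exists_median μ a b i hm0
    choose c hc1 hc2 hc3 hc4 using hmed
    obtain ⟨i, hi⟩ := hμ c
    have hR1 : (Set.univ.pi fun j => Set.Ioc (a j) (if j = i then c i else b j))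
        = R ∩ {x | x i ≤ c i} := by
      ext x
      simp only [hRdef, Set.mem_pi, Set.mem_univ, true_implies, Set.mem_inter_iff,
        Set.mem_Ioc, Set.mem_setOf_eq]
      constructor
      · intro h
        have hxi := h i
        simp only [if_pos rfl] at hxi
        refine ⟨fun j => ?_, hxi.2⟩
        rcases eq_or_ne j i with rfl | hj
        · exact ⟨hxi.1, hxi.2.trans (hc2 j)⟩
        · simpa [hj] using h j
      · rintro ⟨h, hxi⟩ j
        rcases eq_or_ne j i with rfl | hj
        · simpa using ⟨(h j).1, hxi⟩
        · simpa [hj] using h j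
    have hR2 : (Set.univ.pi fun j => Set.Ioc (if j = i then c i else a j) (b j))
        = R ∩ {x | c i < x i} := by
      ext x
      simp only [hRdef, Set.mem_pi, Set.mem_univ, true_implies, Set.mem_inter_iff,
        Set.mem_Ioc, Set.mem_setOf_eq]
      constructor
      · intro h
        have hxi := h i
        simp only [if_pos rfl] at hxi
        refine ⟨fun j => ?_, hxi.1⟩
        rcases eq_or_ne j i with rfl | hj
        · exact ⟨(hc1 j).trans hxi.1, hxi.2⟩
        · simpa [hj] using h j
      · rintro ⟨h, hxi⟩ j
        rcases eq_or_ne j i with rfl | hj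
        · simpa using ⟨hxi, (h j).2⟩
        · simpa [hj] using h j
    have hhalf : μ R / 4 ≤ μ R / 2 :=
      ENNReal.div_le_div_left (by norm_num) _
    refine ⟨Set.univ.pi fun j => Set.Ioc (a j) (if j = i then c i else b j),
      Set.univ.pi fun j => Set.Ioc (if j = i then c i else a j) (b j),
      ⟨_, _, rfl⟩, ⟨_, _, rfl⟩, ?_, ?_, ?_, ?_⟩
    · rw [hR1, hR2]
      ext x
      simp only [Set.mem_union, Set.mem_inter_iff, Set.mem_setOf_eq]
      constructor
      · rintro (⟨h, -⟩ | ⟨h, -⟩) <;> exact h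
      · intro h
        rcases le_or_gt (x i) (c i) with hle | hlt
        · exact Or.inl ⟨h, hle⟩
        · exact Or.inr ⟨h, hlt⟩
    · rw [hR1, hR2]
      rw [Set.disjoint_left]
      rintro x ⟨-, h1⟩ ⟨-, h2⟩
      simp only [Set.mem_setOf_eq] at h1 h2
      linarith
    · rw [hR1]
      exact hhalf.trans (hc3 i)
    · rw [hR2]
      refine hhalf.trans (le_trans (hc4 i) ?_)
      calc μ (R ∩ {x | c i ≤ x i})
          ≤ μ ((R ∩ {x | c i < x i}) ∪ {x' | x' i = c i}) := by
            refine measure_mono ?_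
            rintro x ⟨hx, hxi⟩
            simp only [Set.mem_setOf_eq] at hxi
            rcases eq_or_lt_of_le hxi with heq | hlt
            · exact Or.inr heq.symm
            · exact Or.inl ⟨hx, hlt⟩
        _ ≤ μ (R ∩ {x | c i < x i}) + μ {x' | x' i = c i} := measure_union_le _ _
        _ = μ (R ∩ {x | c i < x i}) := by rw [hi, add_zero]
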